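/- arXiv:1812.00766 — 2 statements merged into one kernel-verified Lean document; each statement's English description precedes it below -/
import Mathlib

section
/- The functions x_i are well defined on [0,1]: if 𝐭 and 𝐮 are two ternary representations of the same t ∈ [0,1] (i.e., Φ(𝐭) = Φ(𝐮) = t), then x_i(𝐭) = x_i(𝐮) for every i ∈ {1,…,n}. -/
open scoped BigOperators ENNReal

/-- `Φ` : evaluation of a ternary digit sequence (digits at indices `1,2,3,…`). -/
noncomputable def Phi (t : ℕ → ℕ) : ℝ := ∑' k : ℕ, (t (k + 1) : ℝ) / 3 ^ (k + 1)

/-- A sequence of ternary digits (elements of `D = {0,1,2}`). -/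
def IsDigitSeq (t : ℕ → ℕ) : Prop := ∀ k, t k ≤ 2

/-- `S_{i+jn}(𝐭) = ∑_{k=1}^{i+jn} t_k − ∑_{s=0}^{j} t_{i+sn}`. -/
def S (n i j : ℕ) (t : ℕ → ℕ) : ℤ :=
  (∑ k ∈ Finset.Icc 1 (i + j * n), (t k : ℤ)) -
    ∑ s ∈ Finset.range (j + 1), (t (i + s * n) : ℤ)

/-- The operator `ξ(a) = 2 − a`, as a permutation of `ℝ` (so that integer powers
`ξ^m`, `m : ℤ`, make sense). -/
def xiPerm : Equiv.Perm ℝ :=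
  ⟨fun a => 2 - a, fun a => 2 - a, fun a => by dsimp; ring, fun a => by dsimp; ring⟩

/-- `x_i(𝐭) = ∑_{j=0}^∞ ξ^{S_{i+jn}(𝐭)}(t_{i+jn}) / 3^{j+1}`. -/
noncomputable def xcoord (n i : ℕ) (t : ℕ → ℕ) : ℝ :=
  ∑' j : ℕ, ((xiPerm ^ (S n i j t)) ((t (i + j * n) : ℝ))) / 3 ^ (j + 1)

/-- The canonical ternary digit expansion of `t ∈ [0,1]` (all digits `2` for `t = 1`). -/
noncomputable def ternaryDigit (t : ℝ) (k : ℕ) : ℕ :=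
  if t = 1 then 2 else (⌊t * 3 ^ k⌋).toNat % 3

/-- The `i`-th coordinate function of the `n`-dimensional Peano curve, as a function
on `[0,1]` (via the canonical ternary representation; by well-definedness this agrees
with `xcoord` on any ternary representation). -/
noncomputable def peanoCoord (n i : ℕ) (t : ℝ) : ℝ := xcoord n i (ternaryDigit t)

lemma xiPerm_sq : xiPerm * xiPerm = 1 := by
  ext x
  simp [xiPerm, Equiv.Perm.mul_apply]

lemma xiPerm_zpow_even (m : ℤ) (hm : Even m) : xiPerm ^ m = 1 := by
  obtain ⟨q, hq⟩ := hm
  rw [hq, ← two_mul, zpow_mul, zpow_two, xiPerm_sq, one_zpow]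

lemma xiPerm_zpow (m : ℤ) (x : ℝ) :
    (xiPerm ^ m) x = if Even m then x else 2 - x := by
  rcases Int.even_or_odd m with h | h
  · rw [if_pos h, xiPerm_zpow_even m h]; rfl
  · obtain ⟨q, hq⟩ := h
    rw [if_neg (by simp [hq, Int.even_iff]), hq, zpow_add,
      xiPerm_zpow_even (2*q) ⟨q, two_mul q⟩, one_mul, zpow_one]
    rfl

lemma even_iff_of_even_sub{m m' : ℤ} (h : Even (m - m')) : (Even m ↔ Even m') := by
  rcases h with ⟨q, hq⟩
  constructor
  · rintro ⟨r, hr⟩; exact ⟨r - q, by omega⟩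
  · rintro ⟨r, hr⟩; exact ⟨r + q, by omega⟩

lemma xiPerm_zpow_parity {m m' : ℤ} (h : Even (m - m')) (x : ℝ) :
    (xiPerm ^ m) x = (xiPerm ^ m') x := by
  rw [xiPerm_zpow, xiPerm_zpow]
  simp [even_iff_of_even_sub h]

lemma xiPerm_zpow_parity' {m m' : ℤ} (h : ¬ Even (m - m')) (x : ℝ) :
    (xiPerm ^ m) x = (xiPerm ^ m') (2 - x) := by
  rw [xiPerm_zpow, xiPerm_zpow]
  have h2 : Even m ↔ ¬ Even m' := by
    constructor
    · intro h' h''; exact h (h'.sub h'')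
    · intro h'
      rcases Int.even_or_odd m with hm | hm
      · exact hm
      · exfalso
        apply h
        rcases hm with ⟨q, hq⟩
        rcases (Int.not_even_iff_odd.mp h') with ⟨r, hr⟩
        exact ⟨q - r, by omega⟩
  by_cases hm : Even m
  · simp [hm, h2.mp hm]
  · have hm' : Even m' := by tauto
    simp [hm, hm']

lemma summable_two_div'(c : ℕ) : Summable (fun j : ℕ => 2 / 3 ^ (j + c) : ℕ → ℝ) := by
  have h := (summable_geometric_of_lt_one (by norm_num : (0:ℝ) ≤ 1/3)
    (by norm_num : (1/3:ℝ) < 1)).mul_left (2 / 3 ^ c)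
  apply h.congr
  intro j
  rw [pow_add]
  field_simp
  rw [← mul_pow]; norm_num

lemma tsum_two_div (c : ℕ) (hc : 1 ≤ c) :
    ∑' j : ℕ, (2 / 3 ^ (j + c) : ℝ) = 1 / 3 ^ (c - 1) := by
  have h1 : ∀ j : ℕ, (2 / 3 ^ (j + c) : ℝ) = (2 / 3 ^ c) * (1/3) ^ j := by
    intro j; rw [pow_add]; field_simp; rw [← mul_pow]; norm_num
  rw [tsum_congr h1, tsum_mul_left,
    tsum_geometric_of_lt_one (by norm_num : (0:ℝ) ≤ 1/3) (by norm_num)]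
  obtain ⟨c', rfl⟩ : ∃ c', c = c' + 1 := ⟨c - 1, by omega⟩
  simp [pow_succ]
  ring

lemma phi_summable (a : ℕ → ℕ) (ha : IsDigitSeq a) :
    Summable (fun k : ℕ => (a (k + 1) : ℝ) / 3 ^ (k + 1)) := by
  apply Summable.of_nonneg_of_le (fun k => by positivity) ?_ (summable_two_div' 1)
  intro k
  apply div_le_div_of_nonneg_right ?_ (by positivity)
  exact_mod_cast ha _

lemma phi_digit_aux (a b : ℕ → ℕ) (ha : IsDigitSeq a) (hb : IsDigitSeq b)
    (h : Phi a = Phi b) (m : ℕ) (hm : 1 ≤ m)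
    (heq : ∀ k, 1 ≤ k → k < m → a k = b k) (hlt : b m < a m) :
    a m = b m + 1 ∧ ∀ k, m < k → a k = 0 ∧ b k = 2 := by
  set fa : ℕ → ℝ := fun k => (a (k + 1) : ℝ) / 3 ^ (k + 1) with hfa
  set fb : ℕ → ℝ := fun k => (b (k + 1) : ℝ) / 3 ^ (k + 1) with hfb
  have hsa := phi_summable a ha
  have hsb := phi_summable b hb
  set g : ℕ → ℝ := fun k => fa k - fb k with hg
  have hsg : Summable g := hsa.sub hsb
  have hg0 : ∑' k, g k = 0 := by
    rw [Summable.tsum_sub hsa hsb]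
    have : Phi a - Phi b = 0 := by rw [h]; ring
    exact this
  set M := m - 1 with hM
  have hmM : m = M + 1 := by omega
  have hsplit := Summable.sum_add_tsum_nat_add M hsg
  have hrange : ∑ k ∈ Finset.range M, g k = 0 := by
    apply Finset.sum_eq_zero
    intro k hk
    have hk' : k < M := Finset.mem_range.mp hk
    have : a (k + 1) = b (k + 1) := heq _ (by omega) (by omega)
    simp [hg, hfa, hfb, this]
  have htail0 : ∑' k, g (k + M) = 0 := by
    rw [hg0, hrange] at hsplit; linarith
  have hsgM : Summable (fun k => g (k + M)) := (summable_nat_add_iff M).mpr hsg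
  have hzero_add := Summable.tsum_eq_zero_add hsgM
  rw [htail0] at hzero_add
  simp only [zero_add] at hzero_add
  -- 0 = g M + ∑' k, g (k + 1 + M)
  have hgM : g M = ((a m : ℝ) - b m) / 3 ^ m := by
    simp [hg, hfa, hfb, hmM, sub_div]
  have htail : ∑' k, g (k + 1 + M) = - ((a m : ℝ) - b m) / 3 ^ m := by
    rw [hgM] at hzero_add; rw [neg_div]; linarith
  -- the nonnegative series h
  set hfun : ℕ → ℝ := fun k => 2 / 3 ^ (k + m + 1) + g (k + 1 + M) with hh
  have hidx : ∀ k : ℕ, k + 1 + M = k + m := by omega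
  have hgk : ∀ k : ℕ, g (k + 1 + M) = ((a (k + m + 1) : ℝ) - b (k + m + 1)) / 3 ^ (k + m + 1) := by
    intro k
    simp only [hg, hfa, hfb, hidx k, sub_div]
  have hnn : ∀ k, 0 ≤ hfun k := by
    intro k
    rw [hh]
    simp only
    rw [hgk k]
    have h1 : (0:ℝ) ≤ (a (k + m + 1) : ℝ) := by positivity
    have h2 : ((b (k + m + 1) : ℝ)) ≤ 2 := by exact_mod_cast hb _
    have h3 : (0:ℝ) < 3 ^ (k + m + 1) := by positivity
    rw [← add_div, le_div_iff₀ h3]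
    linarith
  have hsum2 : Summable (fun k : ℕ => (2 / 3 ^ (k + m + 1) : ℝ)) := by
    have := summable_two_div' (m + 1)
    apply this.congr
    intro k
    norm_num [show k + (m+1) = k + m + 1 by omega]
  have hsumg' : Summable (fun k : ℕ => g (k + 1 + M)) := by
    have h1 : Summable (fun k : ℕ => g (k + (1 + M))) := (summable_nat_add_iff (1 + M)).mpr hsg
    apply h1.congr
    intro k
    norm_num [show k + (1 + M) = k + 1 + M by omega]
  have hsumh : Summable hfun := hsum2.add hsumg'
  have hval : ∑' k, hfun k = (1 - ((a m : ℝ) - b m)) / 3 ^ m := by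
    rw [hh, Summable.tsum_add hsum2 hsumg', htail]
    have h2 : ∑' k : ℕ, (2 / 3 ^ (k + m + 1) : ℝ) = 1 / 3 ^ m := by
      have := tsum_two_div (m + 1) (by omega)
      simp only [show m + 1 - 1 = m by omega] at this
      rw [← this]
      apply tsum_congr
      intro k
      norm_num [show k + (m+1) = k + m + 1 by omega]
    rw [h2]
    ring
  have hd1 : (a m : ℝ) - b m = 1 := by
    have hge : (1:ℝ) ≤ (a m : ℝ) - b m := by
      have : (b m : ℝ) + 1 ≤ a m := by exact_mod_cast hlt
      linarith
    have hle : (a m : ℝ) - b m ≤ 1 := by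
      have h0 : 0 ≤ ∑' k, hfun k := tsum_nonneg hnn
      rw [hval] at h0
      have h3 : (0:ℝ) < 3 ^ m := by positivity
      have h5 : (1 - ((a m : ℝ) - b m)) = ((1 - ((a m : ℝ) - b m)) / 3 ^ m) * 3 ^ m := by
        field_simp
      nlinarith [mul_nonneg h0 h3.le]
    linarith
  have ham : a m = b m + 1 := by
    have : (a m : ℝ) = (b m : ℝ) + 1 := by linarith
    exact_mod_cast this
  refine ⟨ham, ?_⟩
  have hzero : ∑' k, hfun k = 0 := by rw [hval, hd1]; simp
  have heach : ∀ k, hfun k = 0 := by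
    intro k
    have h1 : hfun k ≤ ∑' k, hfun k := Summable.le_tsum hsumh k (fun j _ => hnn j)
    have := hnn k
    rw [hzero] at h1
    linarith
  intro k' hk'
  have hk'' : k' = (k' - m - 1) + m + 1 := by omega
  set k := k' - m - 1 with hkdef
  have h0 := heach k
  rw [hh] at h0
  simp only at h0
  rw [hgk k] at h0
  have h3 : (0:ℝ) < 3 ^ (k + m + 1) := by positivity
  have hab : (a (k + m + 1) : ℝ) - b (k + m + 1) = -2 := by
    field_simp at h0
    linarith
  have h1 : (0:ℝ) ≤ (a (k + m + 1) : ℝ) := by positivity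
  have h2 : ((b (k + m + 1) : ℝ)) ≤ 2 := by exact_mod_cast hb _
  have ha0 : (a (k + m + 1) : ℝ) = 0 := by linarith
  have hb2 : (b (k + m + 1) : ℝ) = 2 := by linarith
  rw [hk'']
  exact ⟨by exact_mod_cast ha0, by exact_mod_cast hb2⟩

noncomputable def T (n i : ℕ) (t : ℕ → ℕ) (j : ℕ) : ℝ :=
  ((xiPerm ^ (S n i j t)) ((t (i + j * n) : ℝ))) / 3 ^ (j + 1)

lemma xcoord_eq' (n i : ℕ) (t : ℕ → ℕ) : xcoord n i t = ∑' j, T n i t j := rfl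

lemma T_bound (n i : ℕ) (t : ℕ → ℕ) (ht : IsDigitSeq t) (j : ℕ) :
    |T n i t j| ≤ 2 / 3 ^ (j + 1) := by
  unfold T
  rw [abs_div, abs_of_pos (by positivity : (0:ℝ) < 3 ^ (j+1))]
  apply div_le_div_of_nonneg_right ?_ (by positivity)
  rw [xiPerm_zpow]
  have h1 : (0:ℝ) ≤ (t (i + j * n) : ℝ) := by positivity
  have h2 : (t (i + j * n) : ℝ) ≤ 2 := by exact_mod_cast ht _
  rw [abs_le]
  split_ifs <;> constructor <;> linarith

lemma T_summable (n i : ℕ) (t : ℕ → ℕ) (ht : IsDigitSeq t) :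
    Summable (T n i t) := by
  apply Summable.of_abs
  exact Summable.of_nonneg_of_le (fun j => abs_nonneg _) (T_bound n i t ht)
    (summable_two_div' 1)

lemma xcoord_step(n i m : ℕ) (hn : 1 ≤ n) (hi : 1 ≤ i) (hm : 1 ≤ m)
    (a b : ℕ → ℕ) (ha : IsDigitSeq a) (hb : IsDigitSeq b)
    (heq : ∀ k, 1 ≤ k → k < m → a k = b k)
    (ham : a m = b m + 1)
    (htail : ∀ k, m < k → a k = 0 ∧ b k = 2) :
    xcoord n i a = xcoord n i b := by
  classical
  set d : ℕ → ℤ := fun k => (a k : ℤ) - b k with hd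
  have hd_lt : ∀ k, 1 ≤ k → k < m → d k = 0 := by
    intro k h1 h2; simp [hd, heq k h1 h2]
  have hd_m : d m = 1 := by simp [hd, ham]
  have hd_gt : ∀ k, m < k → d k = -2 := by
    intro k h1
    obtain ⟨h2, h3⟩ := htail k h1
    simp [hd, h2, h3]
  -- sum over Icc 1 N of d
  have hIcc : ∀ N, m ≤ N → ∑ k ∈ Finset.Icc 1 N, d k = 1 - 2 * ((N : ℤ) - m) := by
    intro N hN
    induction N, hN using Nat.le_induction with
    | base =>
      obtain ⟨M, rfl⟩ : ∃ M, m = M + 1 := ⟨m - 1, by omega⟩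
      rw [Finset.sum_Icc_succ_top (by omega)]
      have h0 : ∑ k ∈ Finset.Icc 1 M, d k = 0 := by
        apply Finset.sum_eq_zero
        intro k hk
        rw [Finset.mem_Icc] at hk
        exact hd_lt k hk.1 (by omega)
      rw [h0, hd_m]; push_cast; ring
    | succ N hN ih =>
      rw [Finset.sum_Icc_succ_top (by omega), ih, hd_gt (N+1) (by omega)]
      push_cast; ring
  -- the difference of the S values
  have hSdiff : ∀ j, S n i j a - S n i j b =
      (∑ k ∈ Finset.Icc 1 (i + j * n), d k) -
        ∑ s ∈ Finset.range (j + 1), d (i + s * n) := by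
    intro j
    unfold S
    rw [hd]
    rw [Finset.sum_sub_distrib, Finset.sum_sub_distrib]
    ring
  -- termwise equality for j with i + j*n < m
  have hT_lt : ∀ j, i + j * n < m → T n i a j = T n i b j := by
    intro j hj
    have hS : S n i j a = S n i j b := by
      unfold S
      congr 1
      · apply Finset.sum_congr rfl
        intro k hk
        rw [Finset.mem_Icc] at hk
        have := heq k hk.1 (by omega)
        simp [this]
      · apply Finset.sum_congr rfl
        intro s hs
        rw [Finset.mem_range] at hs
        have hle : i + s * n ≤ i + j * n := by
          have : s * n ≤ j * n := Nat.mul_le_mul_right n (by omega)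
          omega
        have := heq (i + s * n) (by omega) (by omega)
        simp [this]
    have hdig : a (i + j * n) = b (i + j * n) := heq _ (by omega) hj
    unfold T
    rw [hS, hdig]
  -- termwise equality for j with i + j*n > m, when m is not on the arithmetic progression
  have hT_gt : ∀ j, m < i + j * n → ¬ Even (S n i j a - S n i j b) →
      T n i a j = T n i b j := by
    intro j hj hodd
    obtain ⟨ha0, hb2⟩ := htail (i + j * n) hj
    unfold T
    rw [ha0, hb2]
    rw [show ((0:ℕ):ℝ) = 0 by norm_num, show ((2:ℕ):ℝ) = 2 by norm_num]
    rw [xiPerm_zpow_parity' hodd 0]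
    norm_num
    -- diagonal parity
  have hdiag_even : (∀ s : ℕ, i + s * n ≠ m) → ∀ j : ℕ,
      Even (∑ s ∈ Finset.range (j + 1), d (i + s * n)) := by
    intro hE j
    apply Finset.even_sum
    intro s _
    rcases lt_or_gt_of_ne (hE s) with h | h
    · rw [hd_lt _ (by omega) h]; exact Even.zero
    · rw [hd_gt _ h]; exact ⟨-1, by ring⟩
  have hdiag_odd : ∀ js, i + js * n = m → ∀ j, js ≤ j →
      Odd (∑ s ∈ Finset.range (j + 1), d (i + s * n)) := by
    intro js hjs j hj
    have hmem : js ∈ Finset.range (j + 1) := Finset.mem_range.mpr (by omega)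
    rw [← Finset.add_sum_erase _ _ hmem, hjs, hd_m]
    have heven : Even (∑ s ∈ (Finset.range (j+1)).erase js, d (i + s * n)) := by
      apply Finset.even_sum
      intro s hs
      have hne : s ≠ js := (Finset.mem_erase.mp hs).1
      have hne2 : i + s * n ≠ m := by
        intro hc
        apply hne
        have h2 : s * n = js * n := by omega
        exact Nat.eq_of_mul_eq_mul_right (by omega) h2
      rcases lt_or_gt_of_ne hne2 with h | h
      · rw [hd_lt _ (by omega) h]; exact Even.zero
      · rw [hd_gt _ h]; exact ⟨-1, by ring⟩
    obtain ⟨r, hr⟩ := heven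
    exact ⟨r, by omega⟩
  by_cases hE : ∃ js : ℕ, i + js * n = m
  · -- m is on the progression
    obtain ⟨js, hjs⟩ := hE
    have hab_even : ∀ j, js ≤ j → Even (S n i j a - S n i j b) := by
      intro j hj
      have hmul : js * n ≤ j * n := Nat.mul_le_mul_right n hj
      have hNm : m ≤ i + j * n := by omega
      rw [hSdiff, hIcc _ hNm]
      obtain ⟨q, hq⟩ := hdiag_odd js hjs j hj
      rw [Int.even_iff]; omega
    have hb_even : ∀ j, js ≤ j → Even (S n i j b - S n i js b) := by
      intro j hj
      have hmul : js * n ≤ j * n := Nat.mul_le_mul_right n hj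
      have hNm : m ≤ i + j * n := by omega
      have e1 : Even (∑ k ∈ Finset.Ioc m (i + j * n), (b k : ℤ)) := by
        apply Finset.even_sum
        intro k hk
        rw [Finset.mem_Ioc] at hk
        rw [(htail k hk.1).2]
        exact ⟨1, by norm_num⟩
      have e2 : Even (∑ s ∈ Finset.Ico (js+1) (j+1), (b (i + s * n) : ℤ)) := by
        apply Finset.even_sum
        intro s hs
        rw [Finset.mem_Ico] at hs
        have hmul2 : js * n + n ≤ s * n := by
          have h := Nat.mul_le_mul_right n (show js + 1 ≤ s by omega)
          rwa [add_mul, one_mul] at h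
        have hlt : m < i + s * n := by omega
        rw [(htail _ hlt).2]
        exact ⟨1, by norm_num⟩
      have key : S n i j b - S n i js b =
          (∑ k ∈ Finset.Ioc m (i + j * n), (b k : ℤ)) -
            ∑ s ∈ Finset.Ico (js+1) (j+1), (b (i + s * n) : ℤ) := by
        unfold S
        have h1 : (∑ k ∈ Finset.Ioc 0 m, (b k : ℤ)) +
            ∑ k ∈ Finset.Ioc m (i + j * n), (b k : ℤ) =
            ∑ k ∈ Finset.Ioc 0 (i + j * n), (b k : ℤ) :=
          Finset.sum_Ioc_consecutive _ (by omega) hNm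
        have h2 : ∑ s ∈ Finset.Ico (js+1) (j+1), (b (i + s * n) : ℤ) =
            (∑ s ∈ Finset.range (j+1), (b (i + s * n) : ℤ)) -
              ∑ s ∈ Finset.range (js+1), (b (i + s * n) : ℤ) :=
          Finset.sum_Ico_eq_sub _ (by omega)
        have hIO : ∀ N : ℕ, Finset.Icc 1 N = Finset.Ioc 0 N := by
          intro N; ext x; simp only [Finset.mem_Icc, Finset.mem_Ioc]; omega
        rw [hjs, hIO, hIO]
        omega
      rw [key]
      exact e1.sub e2
    have ha_even : ∀ j, js ≤ j → Even (S n i j a - S n i js b) := by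
      intro j hj
      have h1 : S n i j a - S n i js b =
          (S n i j a - S n i j b) + (S n i j b - S n i js b) := by ring
      rw [h1]
      exact (hab_even j hj).add (hb_even j hj)
    set sigma := S n i js b with hsigma
    set sgn : ℝ := if Even sigma then 1 else -1 with hsgn
    have hpow : ∀ c : ℕ, (0:ℝ) < 3 ^ c := fun c => by positivity
    have hF2 : T n i a js - T n i b js = sgn / 3 ^ (js + 1) := by
      unfold T
      rw [hjs]
      rw [xiPerm_zpow_parity (ha_even js le_rfl), xiPerm_zpow, xiPerm_zpow]
      have hcast : (a m : ℝ) = (b m : ℝ) + 1 := by exact_mod_cast ham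
      by_cases hσ : Even sigma
      · rw [hsgn, if_pos hσ, if_pos hσ, if_pos hσ, div_sub_div_same]
        rw [hcast]; ring
      · rw [hsgn, if_neg hσ, if_neg hσ, if_neg hσ, div_sub_div_same]
        rw [hcast]; ring
    have hF3 : ∀ j, js < j → T n i a j - T n i b j = -2 * sgn / 3 ^ (j + 1) := by
      intro j hj
      have hmul : js * n + n ≤ j * n := by
        have h := Nat.mul_le_mul_right n (show js + 1 ≤ j by omega)
        rwa [add_mul, one_mul] at h
      have hmlt : m < i + j * n := by omega
      obtain ⟨ha0, hb2⟩ := htail _ hmlt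
      unfold T
      rw [ha0, hb2]
      rw [show ((0:ℕ):ℝ) = 0 from by norm_num, show ((2:ℕ):ℝ) = 2 from by norm_num]
      rw [xiPerm_zpow_parity (ha_even j hj.le), xiPerm_zpow_parity (hb_even j hj.le),
        xiPerm_zpow, xiPerm_zpow]
      by_cases hσ : Even sigma
      · rw [hsgn, if_pos hσ, if_pos hσ, if_pos hσ, div_sub_div_same]; ring
      · rw [hsgn, if_neg hσ, if_neg hσ, if_neg hσ, div_sub_div_same]; ring
    rw [xcoord_eq', xcoord_eq']
    have hsa := T_summable n i a ha
    have hsb := T_summable n i b hb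
    have hdiffsum : Summable (fun j => T n i a j - T n i b j) := hsa.sub hsb
    have hDsum : ∑' j, (T n i a j - T n i b j) = 0 := by
      rw [← Summable.sum_add_tsum_nat_add (js + 1) hdiffsum]
      have hfin : ∑ j ∈ Finset.range (js+1), (T n i a j - T n i b j) = sgn / 3 ^ (js+1) := by
        rw [Finset.sum_eq_single js]
        · exact hF2
        · intro j hjmem hne
          rw [Finset.mem_range] at hjmem
          have hmul : j * n + n ≤ js * n := by
            have h := Nat.mul_le_mul_right n (show j + 1 ≤ js by omega)
            rwa [add_mul, one_mul] at h
          have h := hT_lt j (by omega)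
          rw [h]; ring
        · intro h
          exact absurd (Finset.self_mem_range_succ js) h
      have htailsum : ∑' k : ℕ, (T n i a (k + (js+1)) - T n i b (k + (js+1)))
          = - (sgn / 3 ^ (js + 1)) := by
        have hterm : ∀ k : ℕ, T n i a (k + (js+1)) - T n i b (k + (js+1))
            = (-sgn) * (2 / 3 ^ (k + (js + 2))) := by
          intro k
          rw [hF3 (k + (js+1)) (by omega)]
          rw [show k + (js+1) + 1 = k + (js+2) from by omega]
          ring
        rw [tsum_congr hterm, tsum_mul_left, tsum_two_div (js+2) (by omega)]
        rw [show js + 2 - 1 = js + 1 from by omega]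
        ring
      rw [hfin, htailsum]
      ring
    have hts := Summable.tsum_sub hsa hsb
    rw [hDsum] at hts
    linarith
  · -- m is not on the progression
    push_neg at hE
    rw [xcoord_eq', xcoord_eq']
    apply tsum_congr
    intro j
    rcases lt_trichotomy (i + j * n) m with h | h | h
    · exact hT_lt j h
    · exact absurd h (hE j)
    · apply hT_gt j h
      rw [hSdiff j, hIcc _ h.le]
      obtain ⟨q, hq⟩ := hdiag_even hE j
      rw [Int.even_iff]
      omega

lemma xcoord_congr (n i : ℕ) (hi : 1 ≤ i) (a b : ℕ → ℕ)
    (h : ∀ k, 1 ≤ k → a k = b k) : xcoord n i a = xcoord n i b := by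
  rw [xcoord_eq', xcoord_eq']
  apply tsum_congr
  intro j
  unfold T
  have hS : S n i j a = S n i j b := by
    unfold S
    congr 1
    · apply Finset.sum_congr rfl
      intro k hk
      rw [Finset.mem_Icc] at hk
      rw [h k hk.1]
    · apply Finset.sum_congr rfl
      intro s _
      rw [h (i + s * n) (by omega)]
  rw [hS, h (i + j * n) (by omega)]

lemma phi_unique (a b : ℕ → ℕ) (ha : IsDigitSeq a) (hb : IsDigitSeq b)
    (h : Phi a = Phi b) :
    (∀ k, 1 ≤ k → a k = b k) ∨
    ∃ m, 1 ≤ m ∧ (∀ k, 1 ≤ k → k < m → a k = b k) ∧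
      ((a m = b m + 1 ∧ ∀ k, m < k → a k = 0 ∧ b k = 2) ∨
       (b m = a m + 1 ∧ ∀ k, m < k → b k = 0 ∧ a k = 2)) := by
  by_cases hall : ∀ k, 1 ≤ k → a k = b k
  · exact Or.inl hall
  · right
    push_neg at hall
    have hP : ∃ k, 1 ≤ k ∧ a k ≠ b k := hall
    classical
    set m := Nat.find hP with hmdef
    obtain ⟨hm1, hmne⟩ := Nat.find_spec hP
    have heq : ∀ k, 1 ≤ k → k < m → a k = b k := by
      intro k h1 h2
      by_contra hc
      exact Nat.find_min hP h2 ⟨h1, hc⟩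
    refine ⟨m, hm1, heq, ?_⟩
    rcases lt_or_gt_of_ne hmne with hlt | hlt
    · -- a m < b m
      right
      have := phi_digit_aux b a hb ha h.symm m hm1
        (fun k h1 h2 => (heq k h1 h2).symm) hlt
      exact this
    · left
      exact phi_digit_aux a b ha hb h m hm1 heq hlt

/-- the functions `x_i` are well defined on `[0,1]`: any two ternary
representations of the same `t ∈ [0,1]` give the same value. -/
theorem xcoord_well_defined (n : ℕ) (hn : 2 ≤ n) (t : ℝ) (ht : t ∈ Set.Icc (0 : ℝ) 1)
    (a b : ℕ → ℕ) (ha : IsDigitSeq a) (hb : IsDigitSeq b)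
    (hA : Phi a = t) (hB : Phi b = t) :
    ∀ i, 1 ≤ i → i ≤ n → xcoord n i a = xcoord n i b := by
  intro i hi _
  have hphi : Phi a = Phi b := by rw [hA, hB]
  rcases phi_unique a b ha hb hphi with hall | ⟨m, hm1, heq, hcase⟩
  · exact xcoord_congr n i hi a b hall
  · rcases hcase with ⟨ham, htail⟩ | ⟨hbm, htail⟩
    · exact xcoord_step n i m (by omega) hi hm1 a b ha hb heq ham
        (fun k hk => htail k hk)
    · exact (xcoord_step n i m (by omega) hi hm1 b a hb ha
        (fun k h1 h2 => (heq k h1 h2).symm) hbm (fun k hk => htail k hk)).symm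
end

section
/- Suppose 𝐭 and 𝐮 are two ternary representations of the same t ∈ [0,1] that differ first at position i₀ + j₀n, with t_{i₀+j₀n} = u_{i₀+j₀n} + 1, t_{s} = 0 and u_{s} = 2 for all s > i₀+j₀n. Then for every i > i₀ and j ≥ j₀, the integers S_{i+jn}(𝐭) and S_{i+jn}(𝐮) have opposite parities. -/
open scoped BigOperators ENNReal

/-- if two ternary representations of the same `t` first differ at position
`i₀ + j₀n` (with digit one larger in the sequence ending in zeros), then for `i > i₀`
and `j ≥ j₀` the integers `S_{i+jn}(𝐭)` and `S_{i+jn}(𝐮)` have opposite parities. -/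
theorem S_opposite_parity (n : ℕ) (hn : 2 ≤ n) (i0 j0 : ℕ) (hi0 : 1 ≤ i0) (hi0n : i0 ≤ n)
    (a b : ℕ → ℕ) (ha : IsDigitSeq a) (hb : IsDigitSeq b) (hPhi : Phi a = Phi b)
    (hpre : ∀ k, 1 ≤ k → k < i0 + j0 * n → a k = b k)
    (hdig : a (i0 + j0 * n) = b (i0 + j0 * n) + 1)
    (hza : ∀ s, i0 + j0 * n < s → a s = 0)
    (hzb : ∀ s, i0 + j0 * n < s → b s = 2) :
    ∀ i j, i0 < i → i ≤ n → j0 ≤ j → (Even (S n i j a) ↔ ¬ Even (S n i j b)) := by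
  intro i j hii0 hin hjj0
  set m0 := i0 + j0 * n with hm0
  set f : ℕ → ℤ := fun k => (a k : ℤ) - b k with hf
  have hjn : j0 * n ≤ j * n := Nat.mul_le_mul_right n hjj0
  have hm0M : m0 ∈ Finset.Icc 1 (i + j * n) := by
    simp only [Finset.mem_Icc]; omega
  -- terms of f at points ≠ m0 (and ≥ 1) are even
  have hfe : ∀ k, 1 ≤ k → k ≠ m0 → Even (f k) := by
    intro k hk1 hk
    rcases lt_or_gt_of_ne hk with h | h
    · have := hpre k hk1 h
      simp [hf, this]
    · have h1 := hza k h
      have h2 := hzb k h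
      simp only [hf, h1, h2]
      decide
  have hdiff : S n i j a - S n i j b =
      (∑ k ∈ Finset.Icc 1 (i + j * n), f k) -
        ∑ s ∈ Finset.range (j + 1), f (i + s * n) := by
    simp only [S, hf, Finset.sum_sub_distrib]
    ring
  have hodd1 : Odd (∑ k ∈ Finset.Icc 1 (i + j * n), f k) := by
    rw [← Finset.sum_erase_add _ _ hm0M]
    have heven : Even (∑ k ∈ (Finset.Icc 1 (i + j * n)).erase m0, f k) := by
      apply Finset.even_sum
      intro k hk
      rw [Finset.mem_erase, Finset.mem_Icc] at hk
      exact hfe k hk.2.1 hk.1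
    have hfm0 : f m0 = 1 := by simp [hf, hdig]
    rw [hfm0]
    exact heven.add_one
  have heven2 : Even (∑ s ∈ Finset.range (j + 1), f (i + s * n)) := by
    apply Finset.even_sum
    intro s _
    apply hfe
    · omega
    · intro hcontra
      rcases lt_trichotomy s j0 with h | h | h
      · have : s * n + n ≤ j0 * n := by
          calc s * n + n = (s + 1) * n := by ring
          _ ≤ j0 * n := Nat.mul_le_mul_right n h
        omega
      · subst h; omega
      · have : j0 * n + n ≤ s * n := by
          calc j0 * n + n = (j0 + 1) * n := by ring
          _ ≤ s * n := Nat.mul_le_mul_right n h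
        omega
  have hodd : Odd (S n i j a - S n i j b) := by
    rw [hdiff]; exact hodd1.sub_even heven2
  have hne : ¬ (Even (S n i j a) ↔ Even (S n i j b)) := by
    rw [← Int.even_sub]
    exact (Int.not_even_iff_odd).mpr hodd
  by_cases h1 : Even (S n i j a) <;> by_cases h2 : Even (S n i j b) <;> tauto
end
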